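/- arXiv:2210.01295 — 4 statements merged into one kernel-verified Lean document; each statement's English description precedes it below -/
import Mathlib

section
/- Let f(d) = (p·q^d + (1-p)·(1-q)^d) / ((1-p)·q^d + p·(1-q)^d) for parameters p, q ∈ (1/2, 1). Consider a Bernoulli arm whose mean is q with probability 1-p and 1-q with probability p (the 'bad instance'). Given any history of pulls with score d (number of 1s minus number of 0s), if d' denotes the updated score after one additional pull, then the conditional expectation of f(d') given the history equals f(d). That is, f of the score is a martingale under the bad instance. -/
/-- Under the bad instance (prior probability `1-p` of the arm being good, i.e. having
mean `q`; probability `p` of being bad, i.e. mean `1-q`), the likelihood ratio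
`f(d) = (p q^d + (1-p)(1-q)^d)/((1-p) q^d + p (1-q)^d)` of the score
`d = (#1s) - (#0s)` is a martingale: conditioned on any history with score `d`
(under which, by Bayes' rule, the arm is good with probability
`(1-p) q^d / ((1-p) q^d + p (1-q)^d)`), the expectation of `f` at the updated
score after one more pull equals `f(d)`. -/
theorem stmt0 (p q : ℝ) (hp : p ∈ Set.Ioo (1/2 : ℝ) 1) (hq : q ∈ Set.Ioo (1/2 : ℝ) 1)
    (f : ℤ → ℝ)
    (hf : ∀ d : ℤ, f d = (p * q ^ d + (1 - p) * (1 - q) ^ d) /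
      ((1 - p) * q ^ d + p * (1 - q) ^ d))
    (d : ℤ)
    -- posterior probability (given the history with score d) that the arm is good:
    (postGood : ℝ)
    (hpost : postGood = (1 - p) * q ^ d / ((1 - p) * q ^ d + p * (1 - q) ^ d))
    -- probability that the next pull returns 1 (score goes to d+1):
    (probOne : ℝ)
    (hprobOne : probOne = q * postGood + (1 - q) * (1 - postGood)) :
    probOne * f (d + 1) + (1 - probOne) * f (d - 1) = f d := by
  obtain ⟨hp1, hp2⟩ := hp
  obtain ⟨hq1, hq2⟩ := hq
  have hq0 : (0:ℝ) < q := by linarith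
  have hq0' : (0:ℝ) < 1 - q := by linarith
  have hp0' : (0:ℝ) < 1 - p := by linarith
  have hp0 : (0:ℝ) < p := by linarith
  have hA : (0:ℝ) < q ^ d := zpow_pos hq0 d
  have hB : (0:ℝ) < (1 - q) ^ d := zpow_pos hq0' d
  have hD : (0:ℝ) < (1 - p) * q ^ d + p * (1 - q) ^ d := by positivity
  have hD1 : (0:ℝ) < (1 - p) * (q ^ d * q) + p * ((1 - q) ^ d * (1 - q)) := by positivity
  have hD2 : (0:ℝ) < (1 - p) * (q ^ d * q⁻¹) + p * ((1 - q) ^ d * (1 - q)⁻¹) := by positivity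
  rw [hprobOne, hpost]
  rw [hf, hf, hf]
  rw [zpow_add_one₀ hq0.ne', zpow_add_one₀ hq0'.ne', zpow_sub_one₀ hq0.ne', zpow_sub_one₀ hq0'.ne']
  field_simp
  ring
end

section
/- Let p = (1+ε)/2 and q = (1+Δ)/2 with ε, Δ ∈ (0, 1/4), and let f(d) = (p·q^d + (1-p)·(1-q)^d) / ((1-p)·q^d + p·(1-q)^d). Then there is a universal constant C such that for every integer d, f(d+1) - f(d-1) ≤ C·ε·Δ. -/
set_option maxHeartbeats 800000

/-- With `p = (1+ε)/2`, `q = (1+Δ)/2`, `ε, Δ ∈ (0, 1/4)`, and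
`f(d) = (p q^d + (1-p)(1-q)^d)/((1-p) q^d + p (1-q)^d)`, there is a universal
constant `C > 0` such that `f(d+1) - f(d-1) ≤ C ε Δ` for every integer `d`. -/
theorem stmt1 :
    ∃ C : ℝ, 0 < C ∧
      ∀ ε Δ : ℝ, ε ∈ Set.Ioo (0 : ℝ) (1/4) → Δ ∈ Set.Ioo (0 : ℝ) (1/4) →
        ∀ d : ℤ,
          (fun d : ℤ =>
              (((1 + ε)/2) * ((1 + Δ)/2) ^ d + (1 - (1 + ε)/2) * (1 - (1 + Δ)/2) ^ d) /
              ((1 - (1 + ε)/2) * ((1 + Δ)/2) ^ d + ((1 + ε)/2) * (1 - (1 + Δ)/2) ^ d))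
            (d + 1)
          - (fun d : ℤ =>
              (((1 + ε)/2) * ((1 + Δ)/2) ^ d + (1 - (1 + ε)/2) * (1 - (1 + Δ)/2) ^ d) /
              ((1 - (1 + ε)/2) * ((1 + Δ)/2) ^ d + ((1 + ε)/2) * (1 - (1 + Δ)/2) ^ d))
            (d - 1)
          ≤ C * ε * Δ := by
  refine ⟨100, by norm_num, ?_⟩
  rintro ε Δ ⟨hε0, hε1⟩ ⟨hΔ0, hΔ1⟩ d
  simp only
  set p : ℝ := (1 + ε)/2 with hp
  set a : ℝ := (1 + Δ)/2 with ha
  have ha0 : (0:ℝ) < a := by rw [ha]; linarith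
  have hb0 : (0:ℝ) < 1 - a := by rw [ha]; linarith
  have ea : a ^ (d + 1) = a ^ (d - 1) * a ^ (2:ℤ) := by
    rw [show d + 1 = (d - 1) + 2 by ring, zpow_add₀ ha0.ne']
  have eb : (1 - a) ^ (d + 1) = (1 - a) ^ (d - 1) * (1 - a) ^ (2:ℤ) := by
    rw [show d + 1 = (d - 1) + 2 by ring, zpow_add₀ hb0.ne']
  rw [ea, eb]
  have ha2 : a ^ (2:ℤ) = a * a := by rw [zpow_two]
  have hb2 : (1 - a) ^ (2:ℤ) = (1 - a) * (1 - a) := by rw [zpow_two]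
  rw [ha2, hb2]
  set u : ℝ := a ^ (d - 1) with hu
  set v : ℝ := (1 - a) ^ (d - 1) with hv
  have hu0 : 0 < u := zpow_pos ha0 _
  have hv0 : 0 < v := zpow_pos hb0 _
  have hp1 : (1:ℝ)/2 ≤ p := by rw [hp]; linarith
  have hp2 : (3:ℝ)/8 ≤ 1 - p := by rw [hp]; linarith
  have haL : (1:ℝ)/2 ≤ a := by rw [ha]; linarith
  have hab : a - (1 - a) = Δ := by rw [ha]; ring
  have hden1 : 0 < (1 - p) * (u * (a * a)) + p * (v * ((1 - a) * (1 - a))) := by positivity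
  have hden2 : 0 < (1 - p) * u + p * v := by positivity
  rw [div_sub_div _ _ hden1.ne' hden2.ne', div_le_iff₀ (by positivity)]
  have key : (p * (u * (a * a)) + (1 - p) * (v * ((1 - a) * (1 - a)))) * ((1 - p) * u + p * v)
      - ((1 - p) * (u * (a * a)) + p * (v * ((1 - a) * (1 - a)))) * (p * u + (1 - p) * v)
      = (2*p - 1) * (a - (1 - a)) * (u * v) := by ring
  rw [key, hab]
  have hε : 2 * p - 1 = ε := by rw [hp]; ring
  rw [hε]
  have haa : (1:ℝ)/4 ≤ a * a := by nlinarith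
  have h1 : (3:ℝ)/32 ≤ (1 - p) * (a * a) := by nlinarith [mul_le_mul hp2 haa (by norm_num) (by linarith)]
  have hlow1 : (3:ℝ)/32 * u ≤ (1 - p) * (u * (a * a)) + p * (v * ((1 - a) * (1 - a))) := by
    have h2 : (3:ℝ)/32 * u ≤ ((1 - p) * (a * a)) * u := mul_le_mul_of_nonneg_right h1 hu0.le
    nlinarith [mul_nonneg (mul_nonneg (by linarith : (0:ℝ) ≤ p) hv0.le) (mul_nonneg hb0.le hb0.le)]
  have hlow2 : (1:ℝ)/2 * v ≤ (1 - p) * u + p * v := by nlinarith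
  have hprod : (3:ℝ)/64 * (u * v) ≤ ((1 - p) * (u * (a * a)) + p * (v * ((1 - a) * (1 - a)))) * ((1 - p) * u + p * v) := by
    calc (3:ℝ)/64 * (u * v) = (3/32 * u) * (1/2 * v) := by ring
    _ ≤ _ := mul_le_mul hlow1 hlow2 (by positivity) hden1.le
  nlinarith [mul_pos hu0 hv0, mul_pos hε0 hΔ0]
end

section
/- Let H be a finite multiset of n reals with (1−α)-quantile value μ* = Q_{1−α}(H). Suppose each element μ_j is assigned a gap Δ_j ≥ |μ_j − μ*| and confidence bounds satisfying μ_j − Δ_j/2 < L_j ≤ μ_j ≤ U_j < μ_j + Δ_j/2. Then for a fixed element j with gap Δ_j, every element k of H with μ_k ≤ μ* satisfies U_k < μ* + Δ_j/2 provided additionally Δ_j ≥ Δ_k or Δ_k = μ* − μ_k; consequently Q_{1−α}({U_k : k ∈ H}) < μ* + Δ_j/2. -/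
/-- The empirical `(1-α)`-quantile of a finite family of `n` reals. -/
noncomputable def empQuantile (n : ℕ) (α : ℝ) (v : Fin n → ℝ) : ℝ :=
  sInf {x : ℝ | 1 - α ≤ ((Finset.univ.filter fun j => v j ≤ x).card : ℝ) / n}

lemma quantSet_bddBelow (n : ℕ) (hn : 0 < n) (α : ℝ) (hα : α ∈ Set.Ioo (0 : ℝ) 1)
    (v : Fin n → ℝ) :
    BddBelow {x : ℝ | 1 - α ≤ ((Finset.univ.filter fun j => v j ≤ x).card : ℝ) / n} := by
  have hne : (Finset.univ : Finset (Fin n)).Nonempty := ⟨⟨0, hn⟩, Finset.mem_univ _⟩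
  refine ⟨Finset.univ.inf' hne v, fun x hx => ?_⟩
  by_contra h
  push_neg at h
  have hemp : (Finset.univ.filter fun j => v j ≤ x) = ∅ := by
    ext k
    simp only [Finset.mem_filter, Finset.mem_univ, true_and, Finset.notMem_empty, iff_false]
    intro hk
    exact absurd (le_trans (Finset.inf'_le v (Finset.mem_univ k)) hk) (not_le.2 h)
  simp only [Set.mem_setOf_eq, hemp, Finset.card_empty, Nat.cast_zero, zero_div] at hx
  linarith [hα.2]

lemma quantSet_nonempty (n : ℕ) (hn : 0 < n) (α : ℝ) (hα : α ∈ Set.Ioo (0 : ℝ) 1)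
    (v : Fin n → ℝ) :
    Set.Nonempty {x : ℝ | 1 - α ≤ ((Finset.univ.filter fun j => v j ≤ x).card : ℝ) / n} := by
  have hne : (Finset.univ : Finset (Fin n)).Nonempty := ⟨⟨0, hn⟩, Finset.mem_univ _⟩
  refine ⟨Finset.univ.sup' hne v, ?_⟩
  have huniv : (Finset.univ.filter fun j => v j ≤ Finset.univ.sup' hne v) = Finset.univ := by
    ext k
    simp only [Finset.mem_filter, Finset.mem_univ, true_and, iff_true]
    exact Finset.le_sup' v (Finset.mem_univ k)
  have hn' : (0:ℝ) < n := by exact_mod_cast hn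
  simp only [Set.mem_setOf_eq, huniv, Finset.card_univ, Fintype.card_fin]
  rw [div_self (ne_of_gt hn')]
  linarith [hα.1]

lemma quantile_mem (n : ℕ) (hn : 0 < n) (α : ℝ) (hα : α ∈ Set.Ioo (0 : ℝ) 1)
    (v : Fin n → ℝ) :
    1 - α ≤ ((Finset.univ.filter fun k => v k ≤ empQuantile n α v).card : ℝ) / n := by
  have hbdd := quantSet_bddBelow n hn α hα v
  have hSne := quantSet_nonempty n hn α hα v
  set S := {x : ℝ | 1 - α ≤ ((Finset.univ.filter fun j => v j ≤ x).card : ℝ) / n} with hS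
  have hn' : (0:ℝ) < n := by exact_mod_cast hn
  set c := sInf S with hc
  have hcq : empQuantile n α v = c := rfl
  rw [hcq]
  by_cases hT : (Finset.univ.filter fun k => c < v k).Nonempty
  · set ε := (Finset.univ.filter fun k => c < v k).inf' hT v - c with hε
    have hεpos : 0 < ε := by
      have : c < (Finset.univ.filter fun k => c < v k).inf' hT v := by
        rw [Finset.lt_inf'_iff]
        intro k hk
        exact (Finset.mem_filter.1 hk).2
      linarith
    obtain ⟨x, hxS, hxlt⟩ : ∃ x ∈ S, x < c + ε := by
      apply exists_lt_of_csInf_lt hSne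
      linarith
    have hsub : (Finset.univ.filter fun k => v k ≤ x) ⊆ (Finset.univ.filter fun k => v k ≤ c) := by
      intro k hk
      have hvk : v k ≤ x := (Finset.mem_filter.1 hk).2
      simp only [Finset.mem_filter, Finset.mem_univ, true_and]
      by_contra hkc
      push_neg at hkc
      have hkT : k ∈ Finset.univ.filter fun k => c < v k := by
        simp [hkc]
      have := Finset.inf'_le v hkT
      linarith
    have hcard := Finset.card_le_card hsub
    have hxS' : 1 - α ≤ ((Finset.univ.filter fun j => v j ≤ x).card : ℝ) / n := hxS
    calc 1 - α ≤ ((Finset.univ.filter fun j => v j ≤ x).card : ℝ) / n := hxS'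
      _ ≤ ((Finset.univ.filter fun k => v k ≤ c).card : ℝ) / n := by
          gcongr
  · have huniv : (Finset.univ.filter fun k => v k ≤ c) = Finset.univ := by
      ext k
      simp only [Finset.mem_filter, Finset.mem_univ, true_and, iff_true]
      by_contra hkc
      push_neg at hkc
      exact hT ⟨k, by simp [hkc]⟩
    simp only [huniv, Finset.card_univ, Fintype.card_fin]
    rw [div_self (ne_of_gt hn')]
    linarith [hα.1]

/-- Let `μ* = Q_{1-α}(μ)` and suppose each element `k` has gap `Δ k ≥ |μ k − μ*|` and
confidence bounds `μ k − Δ k / 2 < L k ≤ μ k ≤ U k < μ k + Δ k / 2`.  Fix `j` and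
suppose for each `k` either `Δ j ≥ Δ k` or `Δ k = μ* − μ k`.  Then every `k` with
`μ k ≤ μ*` satisfies `U k < μ* + Δ j / 2`; consequently
`Q_{1-α}(U) < μ* + Δ j / 2`. -/
theorem stmt8 (n : ℕ) (hn : 0 < n) (α : ℝ) (hα : α ∈ Set.Ioo (0 : ℝ) 1)
    (μ L U Δ : Fin n → ℝ) (μstar : ℝ) (hμstar : μstar = empQuantile n α μ)
    (hgap : ∀ k, |μ k - μstar| ≤ Δ k)
    (hL : ∀ k, μ k - Δ k / 2 < L k ∧ L k ≤ μ k)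
    (hU : ∀ k, μ k ≤ U k ∧ U k < μ k + Δ k / 2)
    (j : Fin n)
    (hcase : ∀ k, Δ k ≤ Δ j ∨ Δ k = μstar - μ k) :
    (∀ k, μ k ≤ μstar → U k < μstar + Δ j / 2) ∧
    empQuantile n α U < μstar + Δ j / 2 := by
  have hΔj : 0 ≤ Δ j := le_trans (abs_nonneg _) (hgap j)
  have hmain : ∀ k, μ k ≤ μstar → U k < μstar + Δ j / 2 := by
    intro k hk
    rcases hcase k with h | h
    · linarith [(hU k).2]
    · linarith [(hU k).2]
  refine ⟨hmain, ?_⟩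
  have hn' : (0:ℝ) < n := by exact_mod_cast hn
  have hq : 1 - α ≤ ((Finset.univ.filter fun k => μ k ≤ μstar).card : ℝ) / n := by
    rw [hμstar]; exact quantile_mem n hn α hα μ
  set A := Finset.univ.filter fun k => μ k ≤ μstar with hA
  have hAne : A.Nonempty := by
    rw [← Finset.card_pos]
    by_contra h
    push_neg at h
    interval_cases hcard : A.card
    · simp [hcard] at hq; linarith [hα.2]
  obtain ⟨k₀, hk₀A, hk₀⟩ := Finset.exists_mem_eq_sup' hAne U
  set x := A.sup' hAne U with hx
  have hxlt : x < μstar + Δ j / 2 := by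
    have h2 : A.sup' hAne U = U k₀ := hk₀
    rw [show x = A.sup' hAne U from rfl, h2]
    exact hmain k₀ (Finset.mem_filter.1 hk₀A).2
  have hxS : x ∈ {y : ℝ | 1 - α ≤ ((Finset.univ.filter fun k => U k ≤ y).card : ℝ) / n} := by
    have hsub : A ⊆ Finset.univ.filter fun k => U k ≤ x := by
      intro k hk
      simp only [Finset.mem_filter, Finset.mem_univ, true_and]
      exact Finset.le_sup' U hk
    have hcard := Finset.card_le_card hsub
    have : ((A.card : ℝ)) / n ≤ ((Finset.univ.filter fun k => U k ≤ x).card : ℝ) / n := by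
      gcongr
    exact le_trans hq this
  have hle : empQuantile n α U ≤ x :=
    csInf_le (quantSet_bddBelow n hn α hα U) hxS
  linarith
end

section
/- Let H₁, …, H_K be finite multisets of reals each of size n, with empirical (1−α)-quantiles Q₁, …, Q_K, and let H* attain the maximum quantile Q* = max_k Q_k. Suppose for every element μ with valid confidence bounds L ≤ μ ≤ U we have U − L < Δ/2 (all confidence widths below Δ/2), and the bounds are valid for all elements. If Ĥ maximizes Q_{1−α}({L_j : j ∈ H}) over all groups H, then Q_{1−α}(Ĥ) ≥ Q* − Δ, where Q_{1−α}(Ĥ) denotes the true (1−α)-quantile of Ĥ's means. -/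
section helpers

variable {n : ℕ} {α : ℝ}

def qSet (n : ℕ) (α : ℝ) (v : Fin n → ℝ) : Set ℝ :=
  {x : ℝ | 1 - α ≤ ((Finset.univ.filter fun j => v j ≤ x).card : ℝ) / n}

lemma qSet_nonempty (hn : 0 < n) (hα : 0 < α) (v : Fin n → ℝ) :
    (qSet n α v).Nonempty := by
  haveI : Nonempty (Fin n) := Fin.pos_iff_nonempty.mp hn
  refine ⟨Finset.univ.sup' Finset.univ_nonempty v, ?_⟩
  have hfull : (Finset.univ.filter fun j => v j ≤ Finset.univ.sup' Finset.univ_nonempty v)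
      = Finset.univ := by
    apply Finset.filter_true_of_mem
    intro j _
    exact Finset.le_sup' v (Finset.mem_univ j)
  simp only [qSet, Set.mem_setOf_eq, hfull, Finset.card_univ, Fintype.card_fin]
  rw [div_self (by positivity : (n : ℝ) ≠ 0)]
  linarith

lemma qSet_bddBelow (hn : 0 < n) (hα : α < 1) (v : Fin n → ℝ) :
    BddBelow (qSet n α v) := by
  haveI : Nonempty (Fin n) := Fin.pos_iff_nonempty.mp hn
  refine ⟨Finset.univ.inf' Finset.univ_nonempty v, ?_⟩
  intro x hx
  simp only [qSet, Set.mem_setOf_eq] at hx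
  have hcard : 0 < (Finset.univ.filter fun j => v j ≤ x).card := by
    rcases Nat.eq_zero_or_pos (Finset.univ.filter fun j => v j ≤ x).card with h | h
    · rw [h] at hx
      norm_num at hx
      linarith
    · exact h
  obtain ⟨j, hj⟩ := Finset.card_pos.mp hcard
  have := (Finset.mem_filter.mp hj).2
  exact le_trans (Finset.inf'_le v (Finset.mem_univ j)) this

lemma empQuantile_mono' (hn : 0 < n) (hα : α ∈ Set.Ioo (0:ℝ) 1) {v w : Fin n → ℝ}
    (h : ∀ j, v j ≤ w j) : empQuantile n α v ≤ empQuantile n α w := by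
  show sInf (qSet n α v) ≤ sInf (qSet n α w)
  apply csInf_le_csInf (qSet_bddBelow hn hα.2 v) (qSet_nonempty hn hα.1 w)
  intro x hx
  simp only [qSet, Set.mem_setOf_eq] at hx ⊢
  refine le_trans hx (div_le_div_of_nonneg_right ?_ (by positivity))
  refine Nat.cast_le.mpr (Finset.card_le_card ?_)
  intro j hj
  simp only [Finset.mem_filter, Finset.mem_univ, true_and] at hj ⊢
  exact le_trans (h j) hj

lemma empQuantile_shift' (hn : 0 < n) (hα : α ∈ Set.Ioo (0:ℝ) 1) {v w : Fin n → ℝ} {c : ℝ}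
    (h : ∀ j, w j ≤ v j + c) : empQuantile n α w ≤ empQuantile n α v + c := by
  show sInf (qSet n α w) ≤ sInf (qSet n α v) + c
  rw [← sub_le_iff_le_add]
  apply le_csInf (qSet_nonempty hn hα.1 v)
  intro x hx
  rw [sub_le_iff_le_add]
  have hsub : x + c ∈ qSet n α w := by
    simp only [qSet, Set.mem_setOf_eq] at hx ⊢
    refine le_trans hx (div_le_div_of_nonneg_right ?_ (by positivity))
    refine Nat.cast_le.mpr (Finset.card_le_card ?_)
    intro j hj
    simp only [Finset.mem_filter, Finset.mem_univ, true_and] at hj ⊢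
    have := h j
    linarith
  exact csInf_le (qSet_bddBelow hn hα.2 w) hsub

end helpers

/-- Let `H₁, …, H_K` be groups of `n` arms each with means `μ g j`, valid confidence
bounds `L g j ≤ μ g j ≤ U g j` all of width `< Δ/2`.  If `ghat` maximizes the
`(1-α)`-quantile of the lower bounds, then the true `(1-α)`-quantile of group `ghat`
is within `Δ` of the best group's quantile. -/
theorem stmt17 (K n : ℕ) (hK : 0 < K) (hn : 0 < n) (α Δ : ℝ)
    (hα : α ∈ Set.Ioo (0 : ℝ) 1) (hΔ : 0 < Δ)
    (μ L U : Fin K → Fin n → ℝ)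
    (hvalid : ∀ g j, L g j ≤ μ g j ∧ μ g j ≤ U g j)
    (hwidth : ∀ g j, U g j - L g j < Δ / 2)
    (ghat : Fin K)
    (hmax : ∀ g, empQuantile n α (L g) ≤ empQuantile n α (L ghat)) :
    (Finset.univ.sup' (Finset.univ_nonempty_iff.mpr (Fin.pos_iff_nonempty.mp hK))
        (fun g => empQuantile n α (μ g))) - Δ
      ≤ empQuantile n α (μ ghat) := by
  rw [sub_le_iff_le_add]
  apply Finset.sup'_le
  intro g _
  have h1 : empQuantile n α (μ g) ≤ empQuantile n α (U g) :=
    empQuantile_mono' hn hα (fun j => (hvalid g j).2)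
  have h2 : empQuantile n α (U g) ≤ empQuantile n α (L g) + Δ / 2 :=
    empQuantile_shift' hn hα (fun j => by have := hwidth g j; linarith)
  have h3 : empQuantile n α (L ghat) ≤ empQuantile n α (μ ghat) :=
    empQuantile_mono' hn hα (fun j => (hvalid ghat j).1)
  have := hmax g
  linarith
end
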